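/- arXiv:1012.3664 — 5 statements merged into one kernel-verified Lean document; each statement's English description precedes it below -/
import Mathlib

section
/- Let f₁, f₂ ∈ I be nonzero with S(f₁) > S(f₂) in the order μ'. Then f₁ + f₂ ≠ 0 and S(f₁ + f₂) = S(f₁). -/
open MvPolynomial

namespace F5

noncomputable section
open scoped Classical

/-- Monomials (power products) in `n` variables, represented by exponent vectors. -/
abbrev Mon (n : ℕ) : Type := Fin n →₀ ℕ

/-- Module terms `t·eₗ` of the free module `Pᵐ`. -/
abbrev MTerm (n m : ℕ) : Type := (Fin n →₀ ℕ) × Fin m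

/-- Action of a monomial on a module term: `u • (t eₗ) = (u t) eₗ`. -/
def mact {n m : ℕ} (u : Mon n) (σ : MTerm n m) : MTerm n m := (u + σ.1, σ.2)

/-- An admissible order on monomials: a linear order with `1 ≤ t` and
compatibility with multiplication. -/
structure AdmissibleOrder (n : ℕ) where
  ord : LinearOrder (Mon n)
  one_le : ∀ t : Mon n, ord.le 0 t
  mul_lt_mul : ∀ s t u : Mon n, ord.lt s t → ord.lt (u + s) (u + t)

/-- An admissible module order on module terms: a linear well-order compatible
with the monomial action, and such that `σ ≤ u σ`. -/
structure ModuleOrder (n m : ℕ) where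
  ord : LinearOrder (MTerm n m)
  wf : WellFounded ord.lt
  mul_lt_mul : ∀ (σ τ : MTerm n m) (u : Mon n), ord.lt σ τ → ord.lt (mact u σ) (mact u τ)
  le_mul : ∀ (σ : MTerm n m) (u : Mon n), ord.le σ (mact u σ)

variable {k : Type*} [Field k] {n m : ℕ}

/-- The leading monomial of a polynomial with respect to `μ` (junk value `0` for `f = 0`). -/
noncomputable def pLT (μ : AdmissibleOrder n) (f : MvPolynomial (Fin n) k) : Mon n :=
  if h : f.support.Nonempty then @Finset.max' _ μ.ord f.support h else 0

/-- The leading coefficient of a polynomial with respect to `μ`. -/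
noncomputable def pLC (μ : AdmissibleOrder n) (f : MvPolynomial (Fin n) k) : k :=
  f.coeff (pLT μ f)

/-- The set (finset) of module terms occurring in an element of `Pᵐ`. -/
noncomputable def msupport (u : Fin m → MvPolynomial (Fin n) k) : Finset (MTerm n m) :=
  letI := Classical.decEq (MTerm n m)
  Finset.univ.biUnion fun l => (u l).support.image fun t => (t, l)

/-- A junk default module term (needs `m ≠ 0`). -/
def mdefault [NeZero m] : MTerm n m := (0, ⟨0, Nat.pos_of_ne_zero (NeZero.ne m)⟩)

/-- The leading module term of a nonzero element of `Pᵐ` with respect to `μ'`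
(junk value for `0`). -/
noncomputable def mLT [NeZero m] (μ' : ModuleOrder n m) (u : Fin m → MvPolynomial (Fin n) k) :
    MTerm n m :=
  if h : (msupport u).Nonempty then @Finset.max' _ μ'.ord _ h else mdefault

/-- The map `v : Pᵐ → P`, `v(eᵢ) = fᵢ`. -/
noncomputable def vmap (F : Fin m → MvPolynomial (Fin n) k)
    (u : Fin m → MvPolynomial (Fin n) k) : MvPolynomial (Fin n) k :=
  ∑ i, u i * F i

/-- The ideal `I = (f₁, …, fₘ)`. -/
noncomputable def idealI (F : Fin m → MvPolynomial (Fin n) k) : Ideal (MvPolynomial (Fin n) k) :=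
  Ideal.span (Set.range F)

/-- `LT(Syz F)`: leading module terms of nonzero syzygies of `F`. -/
def LTSyz [NeZero m] (μ' : ModuleOrder n m) (F : Fin m → MvPolynomial (Fin n) k) :
    Set (MTerm n m) :=
  {σ | ∃ s : Fin m → MvPolynomial (Fin n) k, s ≠ 0 ∧ vmap F s = 0 ∧ mLT μ' s = σ}

/-- The signature `S(f)`: the `μ'`-minimum of `{LT(u) : v(u) = f}` (junk for `f = 0` or
`f ∉ I`). -/
noncomputable def sig [NeZero m] (μ' : ModuleOrder n m) (F : Fin m → MvPolynomial (Fin n) k)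
    (f : MvPolynomial (Fin n) k) : MTerm n m :=
  if hne : {σ : MTerm n m |
      ∃ u : Fin m → MvPolynomial (Fin n) k, u ≠ 0 ∧ vmap F u = f ∧ mLT μ' u = σ}.Nonempty
  then μ'.wf.min _ hne else mdefault

/-- `f` S-reduces to `g` with `h`, with respect to `σ`. -/
noncomputable def SReduces [NeZero m] (μ : AdmissibleOrder n) (μ' : ModuleOrder n m)
    (F : Fin m → MvPolynomial (Fin n) k)
    (f h g : MvPolynomial (Fin n) k) (σ : MTerm n m) : Prop :=
  ∃ (t : Mon n) (α : k), α ≠ 0 ∧ g = f - (monomial t α) * h ∧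
    (g = 0 ∨ μ.ord.lt (pLT μ g) (pLT μ f)) ∧
    μ'.ord.lt (sig μ' F ((monomial t (1 : k)) * h)) σ

/-- `f` is S-irreducible with respect to `σ`. -/
noncomputable def SIrr [NeZero m] (μ : AdmissibleOrder n) (μ' : ModuleOrder n m)
    (F : Fin m → MvPolynomial (Fin n) k) (f : MvPolynomial (Fin n) k) (σ : MTerm n m) : Prop :=
  f = 0 ∨ ¬ ∃ h : MvPolynomial (Fin n) k, h ∈ idealI F ∧ h ≠ 0 ∧
    ∃ g : MvPolynomial (Fin n) k, SReduces μ μ' F f h g σ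

/-- `G` is an S-Gröbner basis (of `I` w.r.t. `μ`, `F`, `μ'`). -/
noncomputable def IsSGB [NeZero m] (μ : AdmissibleOrder n) (μ' : ModuleOrder n m)
    (F : Fin m → MvPolynomial (Fin n) k) (G : Set (MvPolynomial (Fin n) k)) : Prop :=
  (∀ g ∈ G, g ∈ idealI F ∧ g ≠ 0) ∧
  ∀ f : MvPolynomial (Fin n) k, f ∈ idealI F → f ≠ 0 → SIrr μ μ' F f (sig μ' F f) →
    ∃ g ∈ G, ∃ t : Mon n,
      pLT μ ((monomial t (1 : k)) * g) = pLT μ f ∧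
      sig μ' F ((monomial t (1 : k)) * g) = sig μ' F f

/-- `LT(I)`: the set of leading monomials of nonzero elements of `I`. -/
def LTIdeal (μ : AdmissibleOrder n) (F : Fin m → MvPolynomial (Fin n) k) : Set (Mon n) :=
  {t | ∃ f : MvPolynomial (Fin n) k, f ∈ idealI F ∧ f ≠ 0 ∧ pLT μ f = t}

/-- `φ(t)`: the `μ'`-minimum signature of nonzero elements of `I` with leading monomial `t`. -/
noncomputable def phi [NeZero m] (μ : AdmissibleOrder n) (μ' : ModuleOrder n m)
    (F : Fin m → MvPolynomial (Fin n) k) (t : Mon n) : MTerm n m :=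
  if hne : {σ : MTerm n m | ∃ f : MvPolynomial (Fin n) k,
      f ∈ idealI F ∧ f ≠ 0 ∧ pLT μ f = t ∧ sig μ' F f = σ}.Nonempty
  then μ'.wf.min _ hne else mdefault

/-- `f` is a primitive S-irreducible polynomial. -/
noncomputable def PrimSIrr [NeZero m] (μ : AdmissibleOrder n) (μ' : ModuleOrder n m)
    (F : Fin m → MvPolynomial (Fin n) k) (f : MvPolynomial (Fin n) k) : Prop :=
  f ∈ idealI F ∧ f ≠ 0 ∧ SIrr μ μ' F f (sig μ' F f) ∧
  ¬ ∃ (f' : MvPolynomial (Fin n) k) (t : Mon n),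
      f' ∈ idealI F ∧ f' ≠ 0 ∧ t ≠ 0 ∧ SIrr μ μ' F f' (sig μ' F f') ∧
      pLT μ ((monomial t (1 : k)) * f') = pLT μ f ∧
      sig μ' F ((monomial t (1 : k)) * f') = sig μ' F f

/-- The lcm of two monomials (pointwise maximum of exponents). -/
def lcmMon {n : ℕ} (s t : Mon n) : Mon n := t + (s - t)

/-- The term `u₁ = lcm(LT g₁, LT g₂)/(LC g₁ · LT g₁)` (when the first argument is `g₁`). -/
noncomputable def uterm (μ : AdmissibleOrder n) (g₁ g₂ : MvPolynomial (Fin n) k) :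
    MvPolynomial (Fin n) k :=
  monomial (lcmMon (pLT μ g₁) (pLT μ g₂) - pLT μ g₁) (pLC μ g₁)⁻¹

/-- The S-polynomial of `g₁` and `g₂`. -/
noncomputable def Spol (μ : AdmissibleOrder n) (g₁ g₂ : MvPolynomial (Fin n) k) :
    MvPolynomial (Fin n) k :=
  uterm μ g₁ g₂ * g₁ - uterm μ g₂ g₁ * g₂

/-- `(g₁, g₂)` is a normal pair. -/
noncomputable def NormalPair [NeZero m] (μ : AdmissibleOrder n) (μ' : ModuleOrder n m)
    (F : Fin m → MvPolynomial (Fin n) k) (g₁ g₂ : MvPolynomial (Fin n) k) : Prop :=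
  PrimSIrr μ μ' F g₁ ∧ PrimSIrr μ μ' F g₂ ∧
  sig μ' F (uterm μ g₁ g₂ * g₁) =
    mact (lcmMon (pLT μ g₁) (pLT μ g₂) - pLT μ g₁) (sig μ' F g₁) ∧
  sig μ' F (uterm μ g₂ g₁ * g₂) =
    mact (lcmMon (pLT μ g₂) (pLT μ g₁) - pLT μ g₂) (sig μ' F g₂) ∧
  sig μ' F (uterm μ g₁ g₂ * g₁) ≠ sig μ' F (uterm μ g₂ g₁ * g₂)


end
end F5

open F5 MvPolynomial

namespace F5

section Aux

variable {k : Type*} [Field k] {n m : ℕ}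


lemma MO.lt_of_le_of_lt (μ' : ModuleOrder n m) {a b c : MTerm n m}
    (h1 : μ'.ord.le a b) (h2 : μ'.ord.lt b c) : μ'.ord.lt a c :=
  @_root_.lt_of_le_of_lt _ μ'.ord.toPartialOrder.toPreorder _ _ _ h1 h2

lemma MO.not_le_of_lt (μ' : ModuleOrder n m) {a b : MTerm n m}
    (h : μ'.ord.lt a b) : ¬ μ'.ord.le b a :=
  @_root_.not_le_of_gt _ μ'.ord.toPartialOrder.toPreorder _ _ h

lemma MO.le_antisymm (μ' : ModuleOrder n m) {a b : MTerm n m}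
    (h1 : μ'.ord.le a b) (h2 : μ'.ord.le b a) : a = b :=
  @_root_.le_antisymm _ μ'.ord.toPartialOrder _ _ h1 h2

lemma MO.le_trans (μ' : ModuleOrder n m) {a b c : MTerm n m}
    (h1 : μ'.ord.le a b) (h2 : μ'.ord.le b c) : μ'.ord.le a c :=
  @_root_.le_trans _ μ'.ord.toPartialOrder.toPreorder _ _ _ h1 h2

lemma MO.le_of_lt (μ' : ModuleOrder n m) {a b : MTerm n m}
    (h : μ'.ord.lt a b) : μ'.ord.le a b :=
  @_root_.le_of_lt _ μ'.ord.toPartialOrder.toPreorder _ _ h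

lemma MO.lt_irrefl (μ' : ModuleOrder n m) (a : MTerm n m) : ¬ μ'.ord.lt a a :=
  @_root_.lt_irrefl _ μ'.ord.toPartialOrder.toPreorder a

lemma MO.lt_trichotomy (μ' : ModuleOrder n m) (a b : MTerm n m) :
    μ'.ord.lt a b ∨ a = b ∨ μ'.ord.lt b a :=
  @_root_.lt_trichotomy _ μ'.ord a b

lemma mem_msupport {u : Fin m → MvPolynomial (Fin n) k} {σ : MTerm n m} :
    σ ∈ msupport u ↔ σ.1 ∈ (u σ.2).support := by
  classical
  constructor
  · intro h
    simp only [msupport, Finset.mem_biUnion, Finset.mem_image, Finset.mem_univ, true_and] at h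
    obtain ⟨l, t, ht, rfl⟩ := h
    exact ht
  · intro h
    simp only [msupport, Finset.mem_biUnion, Finset.mem_image, Finset.mem_univ, true_and]
    exact ⟨σ.2, σ.1, h, rfl⟩

lemma msupport_nonempty_iff {u : Fin m → MvPolynomial (Fin n) k} :
    (msupport u).Nonempty ↔ u ≠ 0 := by
  constructor
  · rintro ⟨σ, hσ⟩ h0
    rw [mem_msupport] at hσ
    rw [h0] at hσ
    simp at hσ
  · intro h0
    obtain ⟨l, hl⟩ := Function.ne_iff.1 h0
    obtain ⟨t, ht⟩ := (MvPolynomial.support_nonempty.2 (by simpa using hl))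
    exact ⟨(t, l), mem_msupport.2 ht⟩

lemma msupport_neg {u : Fin m → MvPolynomial (Fin n) k} :
    msupport (-u) = msupport u := by
  ext σ
  rw [mem_msupport, mem_msupport]
  simp

lemma msupport_add_subset {u v : Fin m → MvPolynomial (Fin n) k} :
    msupport (u + v) ⊆ msupport u ∪ msupport v := by
  intro σ hσ
  rw [mem_msupport] at hσ
  have : σ.1 ∈ ((u σ.2) + (v σ.2)).support := by simpa using hσ
  rcases Finset.mem_union.1 (MvPolynomial.support_add this) with h | h
  · exact Finset.mem_union_left _ (mem_msupport.2 h)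
  · exact Finset.mem_union_right _ (mem_msupport.2 h)

lemma mLT_mem [NeZero m] (μ' : ModuleOrder n m) {u : Fin m → MvPolynomial (Fin n) k}
    (hu : u ≠ 0) : mLT μ' u ∈ msupport u := by
  rw [mLT, dif_pos (msupport_nonempty_iff.2 hu)]
  exact @Finset.max'_mem _ μ'.ord _ _

lemma le_mLT [NeZero m] (μ' : ModuleOrder n m) {u : Fin m → MvPolynomial (Fin n) k}
    {σ : MTerm n m} (hσ : σ ∈ msupport u) : μ'.ord.le σ (mLT μ' u) := by
  have hne : (msupport u).Nonempty := ⟨σ, hσ⟩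
  rw [mLT, dif_pos hne]
  exact @Finset.le_max' _ μ'.ord _ _ hσ

lemma mLT_neg [NeZero m] (μ' : ModuleOrder n m) (u : Fin m → MvPolynomial (Fin n) k) :
    mLT μ' (-u) = mLT μ' u := by
  rw [mLT, mLT, msupport_neg]

lemma vmap_add (F u v : Fin m → MvPolynomial (Fin n) k) :
    vmap F (u + v) = vmap F u + vmap F v := by
  simp [vmap, add_mul, Finset.sum_add_distrib]

lemma vmap_neg (F u : Fin m → MvPolynomial (Fin n) k) :
    vmap F (-u) = -vmap F u := by
  simp [vmap]

lemma vmap_sub (F u v : Fin m → MvPolynomial (Fin n) k) :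
    vmap F (u - v) = vmap F u - vmap F v := by
  rw [sub_eq_add_neg, vmap_add, vmap_neg, sub_eq_add_neg]

lemma vmap_zero (F : Fin m → MvPolynomial (Fin n) k) : vmap F 0 = 0 := by
  simp [vmap]

/-- The `mLT` of a sum where one part has strictly smaller `mLT`. -/
lemma mLT_add_eq [NeZero m] (μ' : ModuleOrder n m) {u v : Fin m → MvPolynomial (Fin n) k}
    (hu : u ≠ 0) (hv : v ≠ 0) (h : μ'.ord.lt (mLT μ' v) (mLT μ' u)) :
    u + v ≠ 0 ∧ mLT μ' (u + v) = mLT μ' u := by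
  have hnotmem : mLT μ' u ∉ msupport v := by
    intro hmem
    exact absurd (le_mLT μ' hmem) (MO.not_le_of_lt μ' h)
  have hmemu : mLT μ' u ∈ msupport u := mLT_mem μ' hu
  have hmem : mLT μ' u ∈ msupport (u + v) := by
    rw [mem_msupport] at hmemu ⊢
    rw [mem_msupport] at hnotmem
    rw [MvPolynomial.mem_support_iff] at hmemu ⊢
    rw [MvPolynomial.notMem_support_iff] at hnotmem
    simpa [hnotmem] using hmemu
  have hne : u + v ≠ 0 := msupport_nonempty_iff.1 ⟨_, hmem⟩
  refine ⟨hne, MO.le_antisymm μ' ?_ (le_mLT μ' hmem)⟩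
  have hmemL := mLT_mem μ' hne
  rcases Finset.mem_union.1 (msupport_add_subset hmemL) with hh | hh
  · exact le_mLT μ' hh
  · exact MO.le_trans μ' (le_mLT μ' hh) (MO.le_of_lt μ' h)

/-- Specification of `sig` for a nonzero element of the ideal. -/
lemma sig_spec [NeZero m] (μ' : ModuleOrder n m) (F : Fin m → MvPolynomial (Fin n) k)
    {f : MvPolynomial (Fin n) k} (hI : f ∈ idealI F) (hf : f ≠ 0) :
    (∃ u : Fin m → MvPolynomial (Fin n) k, u ≠ 0 ∧ vmap F u = f ∧ mLT μ' u = sig μ' F f) ∧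
    (∀ u : Fin m → MvPolynomial (Fin n) k, u ≠ 0 → vmap F u = f →
      ¬ μ'.ord.lt (mLT μ' u) (sig μ' F f)) := by
  obtain ⟨c, hc⟩ := Ideal.mem_span_range_iff_exists_fun.1 hI
  have hc0 : c ≠ 0 := by
    intro h
    apply hf
    rw [← hc, h]
    simp
  have hne : {σ : MTerm n m |
      ∃ u : Fin m → MvPolynomial (Fin n) k, u ≠ 0 ∧ vmap F u = f ∧ mLT μ' u = σ}.Nonempty :=
    ⟨mLT μ' c, c, hc0, hc, rfl⟩
  constructor
  · have := μ'.wf.min_mem _ hne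
    obtain ⟨u, hu0, huv, huL⟩ := this
    rw [sig, dif_pos hne]
    exact ⟨u, hu0, huv, huL⟩
  · intro u hu0 huv hlt
    rw [sig, dif_pos hne] at hlt
    exact μ'.wf.not_lt_min {σ : MTerm n m |
      ∃ u : Fin m → MvPolynomial (Fin n) k, u ≠ 0 ∧ vmap F u = f ∧ mLT μ' u = σ}
      (x := mLT μ' u) ⟨u, hu0, huv, rfl⟩ hlt

lemma sig_neg [NeZero m] (μ' : ModuleOrder n m) (F : Fin m → MvPolynomial (Fin n) k)
    {f : MvPolynomial (Fin n) k} (hI : f ∈ idealI F) (hf : f ≠ 0) :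
    sig μ' F (-f) = sig μ' F f := by
  have hnI : -f ∈ idealI F := neg_mem hI
  have hnf : -f ≠ 0 := neg_ne_zero.2 hf
  obtain ⟨⟨u, hu0, huv, huL⟩, hmin⟩ := sig_spec μ' F hnI hnf
  obtain ⟨⟨w, hw0, hwv, hwL⟩, hmin'⟩ := sig_spec μ' F hI hf
  rcases MO.lt_trichotomy μ' (sig μ' F (-f)) (sig μ' F f) with h | h | h
  · exfalso
    refine hmin' (-u) (neg_ne_zero.2 hu0) (by rw [vmap_neg, huv, neg_neg]) ?_
    rw [mLT_neg, huL]; exact h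
  · exact h
  · exfalso
    refine hmin (-w) (neg_ne_zero.2 hw0) (by rw [vmap_neg, hwv]) ?_
    rw [mLT_neg, hwL]; exact h

end Aux

end F5

/-- if `S(f₁) > S(f₂)` then `f₁ + f₂ ≠ 0` and `S(f₁ + f₂) = S(f₁)`. -/
theorem stmt_0 {k : Type*} [Field k] {n m : ℕ} [NeZero m]
    (μ' : ModuleOrder n m) (F : Fin m → MvPolynomial (Fin n) k)
    (f₁ f₂ : MvPolynomial (Fin n) k)
    (hf₁I : f₁ ∈ idealI F) (hf₂I : f₂ ∈ idealI F)
    (hf₁ : f₁ ≠ 0) (hf₂ : f₂ ≠ 0)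
    (hlt : μ'.ord.lt (sig μ' F f₂) (sig μ' F f₁)) :
    f₁ + f₂ ≠ 0 ∧ sig μ' F (f₁ + f₂) = sig μ' F f₁ := by
  have hsum : f₁ + f₂ ≠ 0 := by
    intro h
    have h2 : f₂ = -f₁ := eq_neg_of_add_eq_zero_right h
    rw [h2, sig_neg μ' F hf₁I hf₁] at hlt
    exact MO.lt_irrefl μ' _ hlt
  refine ⟨hsum, ?_⟩
  obtain ⟨⟨u₁, hu₁0, hu₁v, hu₁L⟩, hmin₁⟩ := sig_spec μ' F hf₁I hf₁
  obtain ⟨⟨u₂, hu₂0, hu₂v, hu₂L⟩, -⟩ := sig_spec μ' F hf₂I hf₂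
  have hltu : μ'.ord.lt (mLT μ' u₂) (mLT μ' u₁) := by rw [hu₁L, hu₂L]; exact hlt
  obtain ⟨hadd0, haddL⟩ := mLT_add_eq μ' hu₁0 hu₂0 hltu
  have hsumI : f₁ + f₂ ∈ idealI F := Ideal.add_mem _ hf₁I hf₂I
  obtain ⟨⟨w, hw0, hwv, hwL⟩, hminS⟩ := sig_spec μ' F hsumI hsum
  have h1 : ¬ μ'.ord.lt (mLT μ' (u₁ + u₂)) (sig μ' F (f₁ + f₂)) :=
    hminS _ hadd0 (by rw [vmap_add, hu₁v, hu₂v])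
  rw [haddL, hu₁L] at h1
  rcases MO.lt_trichotomy μ' (sig μ' F (f₁ + f₂)) (sig μ' F f₁) with hlt' | heq | hgt
  · exfalso
    set w' := w - u₂ with hw'def
    have hw'v : vmap F w' = f₁ := by
      rw [hw'def, vmap_sub, hwv, hu₂v]; ring
    have hw'0 : w' ≠ 0 := by
      intro h
      apply hf₁
      rw [← hw'v, h, vmap_zero]
    have hkey : μ'.ord.lt (mLT μ' w') (sig μ' F f₁) := by
      have hmem := mLT_mem μ' hw'0
      have hsub : msupport w' ⊆ msupport w ∪ msupport u₂ := by
        intro σ hσ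
        have : σ ∈ msupport (w + (-u₂)) := by
          rwa [hw'def, sub_eq_add_neg] at hσ
        rcases Finset.mem_union.1 (msupport_add_subset this) with h | h
        · exact Finset.mem_union_left _ h
        · rw [msupport_neg] at h
          exact Finset.mem_union_right _ h
      rcases Finset.mem_union.1 (hsub hmem) with h | h
      · exact MO.lt_of_le_of_lt μ' (le_mLT μ' h) (by rw [hwL]; exact hlt')
      · exact MO.lt_of_le_of_lt μ' (le_mLT μ' h) (by rw [hu₂L]; exact hlt)
    exact hmin₁ _ hw'0 hw'v hkey
  · exact heq
  · exact absurd hgt h1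
end

section
/- Let f₁, f₂ ∈ I be nonzero with S(f₁) = S(f₂) = σ, and suppose there is no λ ∈ k \ {0} with f₁ = λ f₂. Then there exist α, β ∈ k \ {0} such that α f₁ + β f₂ ≠ 0 and S(α f₁ + β f₂) < σ. -/
open MvPolynomial

open F5 MvPolynomial

section helpers

variable {k : Type*} [Field k] {n m : ℕ}

lemma mem_msupport (u : Fin m → MvPolynomial (Fin n) k) (τ : MTerm n m) :
    τ ∈ msupport u ↔ τ.1 ∈ (u τ.2).support := by
  classical
  obtain ⟨t, l⟩ := τ
  simp only [msupport, Finset.mem_biUnion, Finset.mem_univ, true_and, Finset.mem_image,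
    Prod.mk.injEq]
  constructor
  · rintro ⟨l', t', ht', rfl, rfl⟩; exact ht'
  · intro h; exact ⟨l, t, h, rfl, rfl⟩

lemma msupport_nonempty {u : Fin m → MvPolynomial (Fin n) k} (hu : u ≠ 0) :
    (msupport u).Nonempty := by
  classical
  obtain ⟨i, hi⟩ := Function.ne_iff.1 hu
  obtain ⟨t, ht⟩ := MvPolynomial.support_nonempty.2 hi
  exact ⟨(t, i), (mem_msupport u (t, i)).2 ht⟩

lemma mLT_le [NeZero m] (μ' : ModuleOrder n m) (u : Fin m → MvPolynomial (Fin n) k)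
    {τ : MTerm n m} (hτ : τ ∈ msupport u) : μ'.ord.le τ (mLT μ' u) := by
  have hne : (msupport u).Nonempty := ⟨τ, hτ⟩
  rw [mLT, dif_pos hne]
  exact @Finset.le_max' _ μ'.ord _ _ hτ

lemma mLT_mem [NeZero m] (μ' : ModuleOrder n m) {u : Fin m → MvPolynomial (Fin n) k}
    (h : (msupport u).Nonempty) : mLT μ' u ∈ msupport u := by
  rw [mLT, dif_pos h]
  exact @Finset.max'_mem _ μ'.ord _ h

end helpers


/-- if `S(f₁) = S(f₂) = σ` and `f₁` is not a nonzero scalar multiple of `f₂`,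
then there are nonzero `α, β` with `α f₁ + β f₂ ≠ 0` and `S(α f₁ + β f₂) < σ`. -/
theorem stmt_1 {k : Type*} [Field k] {n m : ℕ} [NeZero m]
    (μ' : ModuleOrder n m) (F : Fin m → MvPolynomial (Fin n) k)
    (f₁ f₂ : MvPolynomial (Fin n) k) (σ : MTerm n m)
    (hf₁I : f₁ ∈ idealI F) (hf₂I : f₂ ∈ idealI F)
    (hf₁ : f₁ ≠ 0) (hf₂ : f₂ ≠ 0)
    (hσ₁ : sig μ' F f₁ = σ) (hσ₂ : sig μ' F f₂ = σ)
    (hnp : ¬ ∃ lam : k, lam ≠ 0 ∧ f₁ = lam • f₂) :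
    ∃ α β : k, α ≠ 0 ∧ β ≠ 0 ∧ α • f₁ + β • f₂ ≠ 0 ∧
      μ'.ord.lt (sig μ' F (α • f₁ + β • f₂)) σ := by
  classical
  letI : LinearOrder (MTerm n m) := μ'.ord
  -- nonemptiness of the representation sets
  have hrep : ∀ f : MvPolynomial (Fin n) k, f ∈ idealI F → f ≠ 0 →
      {τ : MTerm n m | ∃ u : Fin m → MvPolynomial (Fin n) k,
        u ≠ 0 ∧ vmap F u = f ∧ mLT μ' u = τ}.Nonempty := by
    intro f hfI hf
    obtain ⟨c, hc⟩ := (Submodule.mem_span_range_iff_exists_fun _).1 hfI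
    have hv : vmap F c = f := by simpa [vmap, smul_eq_mul] using hc
    have hc0 : c ≠ 0 := by
      rintro rfl
      exact hf (by simpa [vmap] using hv.symm)
    exact ⟨mLT μ' c, c, hc0, hv, rfl⟩
  have key : ∀ f : MvPolynomial (Fin n) k, (hI : f ∈ idealI F) → (hf : f ≠ 0) →
      ∃ u : Fin m → MvPolynomial (Fin n) k, u ≠ 0 ∧ vmap F u = f ∧ mLT μ' u = sig μ' F f := by
    intro f hI hf
    have hne := hrep f hI hf
    have hmem := μ'.wf.min_mem _ hne
    rw [sig, dif_pos hne]
    exact hmem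
  obtain ⟨u₁, hu₁0, hu₁v, hu₁LT⟩ := key f₁ hf₁I hf₁
  obtain ⟨u₂, hu₂0, hu₂v, hu₂LT⟩ := key f₂ hf₂I hf₂
  rw [hσ₁] at hu₁LT
  rw [hσ₂] at hu₂LT
  have hσmem₁ : σ ∈ msupport u₁ := hu₁LT ▸ mLT_mem μ' (msupport_nonempty hu₁0)
  have hσmem₂ : σ ∈ msupport u₂ := hu₂LT ▸ mLT_mem μ' (msupport_nonempty hu₂0)
  set c₁ : k := (u₁ σ.2).coeff σ.1 with hc₁def
  set c₂ : k := (u₂ σ.2).coeff σ.1 with hc₂def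
  have hc₁ : c₁ ≠ 0 := by
    simpa [MvPolynomial.mem_support_iff] using (mem_msupport u₁ σ).1 hσmem₁
  have hc₂ : c₂ ≠ 0 := by
    simpa [MvPolynomial.mem_support_iff] using (mem_msupport u₂ σ).1 hσmem₂
  -- the cancelling combination
  set w : Fin m → MvPolynomial (Fin n) k :=
    fun i => MvPolynomial.C c₂ * u₁ i - MvPolynomial.C c₁ * u₂ i with hwdef
  have hvw : vmap F w = c₂ • f₁ + (-c₁) • f₂ := by
    simp only [vmap, hwdef, sub_mul, Finset.sum_sub_distrib, mul_assoc, ← Finset.mul_sum]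
    rw [← vmap, ← vmap, hu₁v, hu₂v]
    simp [MvPolynomial.smul_eq_C_mul, sub_eq_add_neg]
  have hg0 : c₂ • f₁ + (-c₁) • f₂ ≠ 0 := by
    intro h
    apply hnp
    refine ⟨c₂⁻¹ * c₁, by simp [hc₁, hc₂], ?_⟩
    have h1 : c₂ • f₁ = c₁ • f₂ := by
      rw [← sub_eq_zero]; simpa [sub_eq_add_neg] using h
    have := congrArg (fun p => c₂⁻¹ • p) h1
    simpa [smul_smul, inv_mul_cancel₀ hc₂] using this
  have hw0 : w ≠ 0 := fun hw => hg0 (by rw [← hvw, hw]; simp [vmap])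
  -- all terms of w are < σ
  have hlt : ∀ τ ∈ msupport w, μ'.ord.lt τ σ := by
    intro τ hτ
    have hcoeff : (w τ.2).coeff τ.1 ≠ 0 := by
      simpa [MvPolynomial.mem_support_iff] using (mem_msupport w τ).1 hτ
    have hle : μ'.ord.le τ σ := by
      have : (u₁ τ.2).coeff τ.1 ≠ 0 ∨ (u₂ τ.2).coeff τ.1 ≠ 0 := by
        by_contra hcon
        push_neg at hcon
        apply hcoeff
        simp [hwdef, MvPolynomial.coeff_C_mul, hcon.1, hcon.2]
      rcases this with h | h
      · exact hu₁LT ▸ mLT_le μ' u₁ ((mem_msupport u₁ τ).2 (MvPolynomial.mem_support_iff.2 h))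
      · exact hu₂LT ▸ mLT_le μ' u₂ ((mem_msupport u₂ τ).2 (MvPolynomial.mem_support_iff.2 h))
    have hne : τ ≠ σ := by
      rintro rfl
      apply hcoeff
      simp only [hwdef, MvPolynomial.coeff_sub, MvPolynomial.coeff_C_mul, ← hc₁def, ← hc₂def]
      ring
    exact @lt_of_le_of_ne _ μ'.ord.toPartialOrder _ _ hle hne
  have hLTw : μ'.ord.lt (mLT μ' w) σ := hlt _ (mLT_mem μ' (msupport_nonempty hw0))
  -- conclude about the signature
  refine ⟨c₂, -c₁, hc₂, neg_ne_zero.2 hc₁, hg0, ?_⟩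
  have hne : {τ : MTerm n m | ∃ u : Fin m → MvPolynomial (Fin n) k,
      u ≠ 0 ∧ vmap F u = c₂ • f₁ + (-c₁) • f₂ ∧ mLT μ' u = τ}.Nonempty :=
    ⟨mLT μ' w, w, hw0, hvw, rfl⟩
  have hsig : sig μ' F (c₂ • f₁ + (-c₁) • f₂) = μ'.wf.min _ hne := by
    rw [sig, dif_pos hne]
  have hnotlt := μ'.wf.not_lt_min {τ : MTerm n m | ∃ u : Fin m → MvPolynomial (Fin n) k,
      u ≠ 0 ∧ vmap F u = c₂ • f₁ + (-c₁) • f₂ ∧ mLT μ' u = τ} (show mLT μ' w ∈ _ from ⟨w, hw0, hvw, rfl⟩)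
  have hle : μ'.ord.le (sig μ' F (c₂ • f₁ + (-c₁) • f₂)) (mLT μ' w) := by
    rw [hsig]; exact (@not_lt _ μ'.ord _ _).1 hnotlt
  exact @lt_of_le_of_lt _ μ'.ord.toPartialOrder.toPreorder _ _ _ hle hLTw
end

section
/- Let f ∈ I be nonzero and t ∈ 𝕋ⁿ (so that tf is a nonzero element of I). Then S(tf) ≤ t·S(f); moreover S(tf) = t·S(f) if and only if t·S(f) ∈ NS(Syz F), and S(tf) < t·S(f) if and only if t·S(f) ∈ LT(Syz F). -/
open MvPolynomial

open F5 MvPolynomial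

section Aux
open F5 MvPolynomial

namespace F5Aux

noncomputable section
open scoped Classical

variable {k : Type*} [Field k] {n m : ℕ} [NeZero m]


lemma lo_le_of_lt {α : Type*} (L : LinearOrder α) {a b : α} (h : L.lt a b) : L.le a b :=
  (L.lt_iff_le_not_ge a b).mp h |>.1

lemma lo_not_lt {α : Type*} (L : LinearOrder α) {a b : α} (h : ¬ L.lt a b) : L.le b a := by
  by_contra hba
  rcases L.le_total a b with hab | hba'
  · exact h ((L.lt_iff_le_not_ge a b).mpr ⟨hab, hba⟩)
  · exact hba hba'

lemma lo_not_lt_of_le {α : Type*} (L : LinearOrder α) {a b : α} (h : L.le a b) :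
    ¬ L.lt b a := fun hlt => ((L.lt_iff_le_not_ge b a).mp hlt).2 h

lemma lo_lt_of_le_of_ne {α : Type*} (L : LinearOrder α) {a b : α} (hle : L.le a b)
    (hne : a ≠ b) : L.lt a b :=
  (L.lt_iff_le_not_ge a b).mpr ⟨hle, fun hba => hne (L.le_antisymm _ _ hle hba)⟩

lemma lo_lt_irrefl {α : Type*} (L : LinearOrder α) (a : α) : ¬ L.lt a a :=
  fun h => ((L.lt_iff_le_not_ge a a).mp h).2 (L.le_refl a)

lemma lo_lt_of_le_of_lt {α : Type*} (L : LinearOrder α) {a b c : α} (h1 : L.le a b)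
    (h2 : L.lt b c) : L.lt a c := by
  have h2' := (L.lt_iff_le_not_ge b c).mp h2
  exact (L.lt_iff_le_not_ge a c).mpr
    ⟨L.le_trans _ _ _ h1 h2'.1, fun hca => h2'.2 (L.le_trans _ _ _ hca h1)⟩

def mcoeff (u : Fin m → MvPolynomial (Fin n) k) (σ : MTerm n m) : k := (u σ.2).coeff σ.1

lemma mem_msupport {u : Fin m → MvPolynomial (Fin n) k} {σ : MTerm n m} :
    σ ∈ msupport u ↔ mcoeff u σ ≠ 0 := by
  classical
  unfold msupport mcoeff
  simp only [Finset.mem_biUnion, Finset.mem_univ, true_and, Finset.mem_image, mem_support_iff]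
  constructor
  · rintro ⟨l, s, hs, rfl⟩; exact hs
  · intro h; exact ⟨σ.2, σ.1, h, rfl⟩

lemma msupport_nonempty {u : Fin m → MvPolynomial (Fin n) k} (hu : u ≠ 0) :
    (msupport u).Nonempty := by
  have : ∃ l, u l ≠ 0 := by
    by_contra h
    push_neg at h
    exact hu (funext fun l => h l)
  obtain ⟨l, hl⟩ := this
  obtain ⟨s, hs⟩ := (MvPolynomial.support_nonempty.mpr hl)
  exact ⟨(s, l), mem_msupport.mpr (MvPolynomial.mem_support_iff.mp hs)⟩

lemma ne_zero_of_mcoeff {u : Fin m → MvPolynomial (Fin n) k} {σ : MTerm n m}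
    (h : mcoeff u σ ≠ 0) : u ≠ 0 := by
  rintro rfl
  exact h (by simp [mcoeff])

lemma mLT_mem (μ' : ModuleOrder n m) {u : Fin m → MvPolynomial (Fin n) k} (hu : u ≠ 0) :
    mLT μ' u ∈ msupport u := by
  rw [mLT, dif_pos (msupport_nonempty hu)]
  exact @Finset.max'_mem _ μ'.ord _ _

lemma le_mLT (μ' : ModuleOrder n m) {u : Fin m → MvPolynomial (Fin n) k} {σ : MTerm n m}
    (h : σ ∈ msupport u) : μ'.ord.le σ (mLT μ' u) := by
  have hu : u ≠ 0 := ne_zero_of_mcoeff (mem_msupport.mp h)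
  rw [mLT, dif_pos (msupport_nonempty hu)]
  exact @Finset.le_max' _ μ'.ord _ _ h

lemma mLT_eq_of (μ' : ModuleOrder n m) {u : Fin m → MvPolynomial (Fin n) k} {σ : MTerm n m}
    (hc : mcoeff u σ ≠ 0) (hmax : ∀ τ ∈ msupport u, μ'.ord.le τ σ) : mLT μ' u = σ := by
  have hu : u ≠ 0 := ne_zero_of_mcoeff hc
  exact μ'.ord.le_antisymm _ _ (hmax _ (mLT_mem μ' hu)) (le_mLT μ' (mem_msupport.mpr hc))

lemma vmap_sub (F u w : Fin m → MvPolynomial (Fin n) k) :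
    vmap F (u - w) = vmap F u - vmap F w := by
  simp [vmap, sub_mul, Finset.sum_sub_distrib]

lemma vmap_mul (F : Fin m → MvPolynomial (Fin n) k) (p : MvPolynomial (Fin n) k)
    (u : Fin m → MvPolynomial (Fin n) k) :
    vmap F (fun l => p * u l) = p * vmap F u := by
  simp [vmap, Finset.mul_sum, mul_assoc]

lemma sig_spec (μ' : ModuleOrder n m) (F : Fin m → MvPolynomial (Fin n) k)
    {f : MvPolynomial (Fin n) k} (hfI : f ∈ idealI F) (hf : f ≠ 0) :
    ∃ u, u ≠ 0 ∧ vmap F u = f ∧ mLT μ' u = sig μ' F f := by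
  have hne : {σ : MTerm n m |
      ∃ u : Fin m → MvPolynomial (Fin n) k, u ≠ 0 ∧ vmap F u = f ∧ mLT μ' u = σ}.Nonempty := by
    obtain ⟨c, hc⟩ := Ideal.mem_span_range_iff_exists_fun.mp hfI
    have hc0 : c ≠ 0 := by
      rintro rfl
      apply hf
      rw [← hc]; simp
    exact ⟨mLT μ' c, c, hc0, hc, rfl⟩
  rw [sig, dif_pos hne]
  exact μ'.wf.min_mem _ hne

lemma sig_le_mLT (μ' : ModuleOrder n m) (F : Fin m → MvPolynomial (Fin n) k)
    {f : MvPolynomial (Fin n) k} {u : Fin m → MvPolynomial (Fin n) k}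
    (hu : u ≠ 0) (hv : vmap F u = f) :
    μ'.ord.le (sig μ' F f) (mLT μ' u) := by
  have hne : {σ : MTerm n m |
      ∃ u : Fin m → MvPolynomial (Fin n) k, u ≠ 0 ∧ vmap F u = f ∧ mLT μ' u = σ}.Nonempty :=
    ⟨mLT μ' u, u, hu, hv, rfl⟩
  rw [sig, dif_pos hne]
  have h := μ'.wf.not_lt_min {σ : MTerm n m |
      ∃ u : Fin m → MvPolynomial (Fin n) k, u ≠ 0 ∧ vmap F u = f ∧ mLT μ' u = σ}
    (show mLT μ' u ∈ _ from ⟨u, hu, hv, rfl⟩)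
  exact lo_not_lt μ'.ord h

lemma mact_le_mact (μ' : ModuleOrder n m) {σ τ : MTerm n m} (t : Mon n)
    (h : μ'.ord.le σ τ) : μ'.ord.le (mact t σ) (mact t τ) := by
  by_cases h' : σ = τ
  · subst h'; exact μ'.ord.le_refl _
  · exact lo_le_of_lt μ'.ord (μ'.mul_lt_mul _ _ _ (lo_lt_of_le_of_ne μ'.ord h h'))

lemma mLT_monomial_mul (μ' : ModuleOrder n m) {u : Fin m → MvPolynomial (Fin n) k}
    (hu : u ≠ 0) (t : Mon n) {c : k} (hc : c ≠ 0) :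
    mLT μ' (fun l => monomial t c * u l) = mact t (mLT μ' u) := by
  apply mLT_eq_of
  · show ((fun l => monomial t c * u l) (mact t (mLT μ' u)).2).coeff (mact t (mLT μ' u)).1 ≠ 0
    show (monomial t c * u (mLT μ' u).2).coeff (t + (mLT μ' u).1) ≠ 0
    rw [MvPolynomial.coeff_monomial_mul]
    exact mul_ne_zero hc (mem_msupport.mp (mLT_mem μ' hu))
  · intro τ hτ
    have hcoef := mem_msupport.mp hτ
    rw [mcoeff, MvPolynomial.coeff_monomial_mul'] at hcoef
    by_cases h : t ≤ τ.1
    · rw [if_pos h] at hcoef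
      have hs : mcoeff u (τ.1 - t, τ.2) ≠ 0 := fun h0 => hcoef (by rw [mcoeff] at h0; simp [h0])
      have h1 : μ'.ord.le (τ.1 - t, τ.2) (mLT μ' u) := le_mLT μ' (mem_msupport.mpr hs)
      have h2 := mact_le_mact μ' t h1
      have h3 : mact t ((τ.1 - t, τ.2) : MTerm n m) = τ := by
        simp only [mact]
        rw [add_tsub_cancel_of_le h]
      rwa [h3] at h2
    · rw [if_neg h] at hcoef
      exact absurd rfl hcoef

end
end F5Aux
end Aux

/-- `S(tf) ≤ t·S(f)`, with equality iff `t·S(f) ∈ NS(Syz F)` and strict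
inequality iff `t·S(f) ∈ LT(Syz F)`. -/
theorem stmt_2 {k : Type*} [Field k] {n m : ℕ} [NeZero m]
    (μ' : ModuleOrder n m) (F : Fin m → MvPolynomial (Fin n) k)
    (f : MvPolynomial (Fin n) k) (t : Mon n)
    (hfI : f ∈ idealI F) (hf : f ≠ 0) :
    μ'.ord.le (sig μ' F ((monomial t (1 : k)) * f)) (mact t (sig μ' F f)) ∧
    (sig μ' F ((monomial t (1 : k)) * f) = mact t (sig μ' F f) ↔
       mact t (sig μ' F f) ∉ LTSyz μ' F) ∧
    (μ'.ord.lt (sig μ' F ((monomial t (1 : k)) * f)) (mact t (sig μ' F f)) ↔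
       mact t (sig μ' F f) ∈ LTSyz μ' F) := by
  classical
  obtain ⟨u, hu0, huv, huLT⟩ := F5Aux.sig_spec μ' F hfI hf
  set S := sig μ' F f with hS
  have htf : (monomial t (1 : k)) * f ≠ 0 :=
    mul_ne_zero (by simp [MvPolynomial.monomial_eq_zero]) hf
  have htfI : (monomial t (1 : k)) * f ∈ idealI F := Ideal.mul_mem_left _ _ hfI
  set u' : Fin m → MvPolynomial (Fin n) k := fun l => monomial t (1 : k) * u l with hu'
  have hu'v : vmap F u' = monomial t 1 * f := by rw [hu', F5Aux.vmap_mul, huv]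
  have hu'LT : mLT μ' u' = mact t S := by
    rw [hu', F5Aux.mLT_monomial_mul μ' hu0 t one_ne_zero, huLT]
  have hu'0 : u' ≠ 0 := by
    intro h
    apply htf
    rw [← hu'v, h]
    simp [vmap]
  have hu'c : F5Aux.mcoeff u' (mact t S) ≠ 0 := by
    rw [← hu'LT]
    exact F5Aux.mem_msupport.mp (F5Aux.mLT_mem μ' hu'0)
  have hle : μ'.ord.le (sig μ' F (monomial t 1 * f)) (mact t S) := by
    have h := F5Aux.sig_le_mLT μ' F hu'0 hu'v
    rwa [hu'LT] at h
  have dir2 : μ'.ord.lt (sig μ' F (monomial t 1 * f)) (mact t S) → mact t S ∈ LTSyz μ' F := by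
    intro hlt
    obtain ⟨w, hw0, hwv, hwLT⟩ := F5Aux.sig_spec μ' F htfI htf
    have hwc : F5Aux.mcoeff w (mact t S) = 0 := by
      by_contra hc
      have h1 : μ'.ord.le (mact t S) (mLT μ' w) := F5Aux.le_mLT μ' (F5Aux.mem_msupport.mpr hc)
      rw [hwLT] at h1
      exact absurd hlt (F5Aux.lo_not_lt_of_le μ'.ord h1)
    have hsub : ∀ σ, F5Aux.mcoeff (u' - w) σ = F5Aux.mcoeff u' σ - F5Aux.mcoeff w σ := by
      intro σ; simp [F5Aux.mcoeff]
    have hc : F5Aux.mcoeff (u' - w) (mact t S) ≠ 0 := by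
      rw [hsub, hwc, sub_zero]; exact hu'c
    refine ⟨u' - w, F5Aux.ne_zero_of_mcoeff hc, ?_, ?_⟩
    · rw [F5Aux.vmap_sub, hu'v, hwv, sub_self]
    · apply F5Aux.mLT_eq_of μ' hc
      intro τ hτ
      have hτc := F5Aux.mem_msupport.mp hτ
      rw [hsub] at hτc
      rcases (show F5Aux.mcoeff u' τ ≠ 0 ∨ F5Aux.mcoeff w τ ≠ 0 by
          by_contra hn; push_neg at hn; rw [hn.1, hn.2, sub_zero] at hτc; exact hτc rfl)
        with h | h
      · have := F5Aux.le_mLT μ' (F5Aux.mem_msupport.mpr h)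
        rwa [hu'LT] at this
      · have h1 := F5Aux.le_mLT μ' (F5Aux.mem_msupport.mpr h)
        rw [hwLT] at h1
        exact F5Aux.lo_le_of_lt μ'.ord (F5Aux.lo_lt_of_le_of_lt μ'.ord h1 hlt)
  have dir1 : mact t S ∈ LTSyz μ' F → μ'.ord.lt (sig μ' F (monomial t 1 * f)) (mact t S) := by
    rintro ⟨s, hs0, hsv, hsLT⟩
    have hsc : F5Aux.mcoeff s (mact t S) ≠ 0 := by
      rw [← hsLT]
      exact F5Aux.mem_msupport.mp (F5Aux.mLT_mem μ' hs0)
    set c : k := F5Aux.mcoeff u' (mact t S) / F5Aux.mcoeff s (mact t S) with hcdef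
    set w : Fin m → MvPolynomial (Fin n) k := u' - fun l => C c * s l with hwdef
    have hsub : ∀ σ, F5Aux.mcoeff w σ = F5Aux.mcoeff u' σ - c * F5Aux.mcoeff s σ := by
      intro σ; simp [hwdef, F5Aux.mcoeff]
    have hwv : vmap F w = monomial t 1 * f := by
      rw [hwdef, F5Aux.vmap_sub, hu'v, F5Aux.vmap_mul, hsv, mul_zero, sub_zero]
    have hw0 : w ≠ 0 := by
      intro h
      apply htf
      rw [← hwv, h]
      simp [vmap]
    have hwc : F5Aux.mcoeff w (mact t S) = 0 := by
      rw [hsub, hcdef, div_mul_cancel₀ _ hsc, sub_self]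
    have hwlt : μ'.ord.lt (mLT μ' w) (mact t S) := by
      have hmem := F5Aux.mLT_mem μ' hw0
      have hne : mLT μ' w ≠ mact t S := by
        intro h
        have := F5Aux.mem_msupport.mp hmem
        rw [h, hwc] at this
        exact this rfl
      have hle' : μ'.ord.le (mLT μ' w) (mact t S) := by
        have hτc := F5Aux.mem_msupport.mp hmem
        rw [hsub] at hτc
        rcases (show F5Aux.mcoeff u' (mLT μ' w) ≠ 0 ∨ F5Aux.mcoeff s (mLT μ' w) ≠ 0 by
            by_contra hn; push_neg at hn; rw [hn.1, hn.2, mul_zero, sub_zero] at hτc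
            exact hτc rfl)
          with h | h
        · have := F5Aux.le_mLT μ' (F5Aux.mem_msupport.mpr h)
          rwa [hu'LT] at this
        · have := F5Aux.le_mLT μ' (F5Aux.mem_msupport.mpr h)
          rwa [hsLT] at this
      exact F5Aux.lo_lt_of_le_of_ne μ'.ord hle' hne
    exact F5Aux.lo_lt_of_le_of_lt μ'.ord (F5Aux.sig_le_mLT μ' F hw0 hwv) hwlt
  refine ⟨hle, ⟨?_, ?_⟩, dir2, dir1⟩
  · intro heq hmem
    have h := dir1 hmem
    rw [heq] at h
    exact F5Aux.lo_lt_irrefl μ'.ord _ h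
  · intro hmem
    exact μ'.ord.le_antisymm _ _ hle (F5Aux.lo_not_lt μ'.ord fun h => hmem (dir2 h))
end

section
/- A nonzero f ∈ I is S-irreducible (with respect to S(f)) if and only if S(f) = φ(LT(f)). -/
open MvPolynomial

open F5 MvPolynomial



open MvPolynomial F5
open scoped Classical

namespace F5Aux

variable {k : Type*} [Field k] {n m : ℕ} [NeZero m]

theorem pLT_mem (μ : AdmissibleOrder n) {f : MvPolynomial (Fin n) k} (hf : f ≠ 0) :
    pLT μ f ∈ f.support := by
  have h : f.support.Nonempty := Finset.nonempty_iff_ne_empty.mpr (fun h => hf (MvPolynomial.support_eq_empty.mp h))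
  rw [pLT, dif_pos h]
  exact @Finset.max'_mem _ μ.ord _ h

theorem le_pLT (μ : AdmissibleOrder n) {f : MvPolynomial (Fin n) k} {s : Mon n}
    (hs : s ∈ f.support) : μ.ord.le s (pLT μ f) := by
  have h : f.support.Nonempty := ⟨s, hs⟩
  rw [pLT, dif_pos h]
  exact @Finset.le_max' _ μ.ord _ _ hs

theorem support_C_mul {α : k} (hα : α ≠ 0) (p : MvPolynomial (Fin n) k) :
    (C α * p).support = p.support := by
  ext s
  simp [MvPolynomial.mem_support_iff, coeff_C_mul, hα]

theorem pLT_C_mul (μ : AdmissibleOrder n) {α : k} (hα : α ≠ 0) (p : MvPolynomial (Fin n) k) :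
    pLT μ (C α * p) = pLT μ p := by
  rw [pLT, pLT, support_C_mul hα]

theorem pLC_ne_zero (μ : AdmissibleOrder n) {f : MvPolynomial (Fin n) k} (hf : f ≠ 0) :
    pLC μ f ≠ 0 := by
  have := pLT_mem μ hf
  rw [MvPolynomial.mem_support_iff] at this
  exact this

/-- if every term of `g` is `<` `pLT f`, then `f - g ≠ 0` and `pLT (f-g) = pLT f`. -/
theorem pLT_sub_eq (μ : AdmissibleOrder n) {f g : MvPolynomial (Fin n) k} (hf : f ≠ 0)
    (hg : ∀ s ∈ g.support, μ.ord.lt s (pLT μ f)) :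
    f - g ≠ 0 ∧ pLT μ (f - g) = pLT μ f := by
  have hgc : g.coeff (pLT μ f) = 0 := by
    by_contra hc
    exact absurd (hg _ (MvPolynomial.mem_support_iff.mpr hc))
      (@lt_irrefl _ μ.ord.toPartialOrder.toPreorder _)
  have hfc : (f - g).coeff (pLT μ f) = f.coeff (pLT μ f) := by
    rw [MvPolynomial.coeff_sub, hgc, sub_zero]
  have hfc0 : f.coeff (pLT μ f) ≠ 0 := pLC_ne_zero μ hf
  have hne : f - g ≠ 0 := by
    intro h
    rw [h] at hfc
    exact hfc0 (by simpa using hfc.symm)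
  refine ⟨hne, @le_antisymm _ μ.ord.toPartialOrder _ _ ?_ ?_⟩
  · have hmem := pLT_mem μ hne
    have hsub : (f - g).support ⊆ f.support ∪ g.support := by
      intro s hs
      by_contra hns
      simp only [Finset.mem_union, MvPolynomial.mem_support_iff, not_or, not_not] at hns
      rw [MvPolynomial.mem_support_iff, MvPolynomial.coeff_sub, hns.1, hns.2] at hs
      exact hs (by ring)
    rcases Finset.mem_union.mp (hsub hmem) with h | h
    · exact le_pLT μ h
    · exact @le_of_lt _ μ.ord.toPartialOrder.toPreorder _ _ (hg _ h)
  · exact le_pLT μ (by rw [MvPolynomial.mem_support_iff, hfc]; exact hfc0)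

theorem pLT_lt_of (μ : AdmissibleOrder n) {f g : MvPolynomial (Fin n) k}
    (h1 : ∀ s ∈ g.support, μ.ord.le s (pLT μ f))
    (h2 : g.coeff (pLT μ f) = 0) :
    g = 0 ∨ μ.ord.lt (pLT μ g) (pLT μ f) := by
  by_cases hg : g = 0
  · exact Or.inl hg
  · refine Or.inr (@lt_of_le_of_ne _ μ.ord.toPartialOrder _ _ (h1 _ (pLT_mem μ hg)) ?_)
    intro he
    have := pLT_mem μ hg
    rw [MvPolynomial.mem_support_iff, he, h2] at this
    exact this rfl

/-- The set whose min is `sig`. -/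
def sigSet (μ' : ModuleOrder n m) (F : Fin m → MvPolynomial (Fin n) k)
    (f : MvPolynomial (Fin n) k) : Set (MTerm n m) :=
  {σ : MTerm n m | ∃ u : Fin m → MvPolynomial (Fin n) k,
      u ≠ 0 ∧ vmap F u = f ∧ mLT μ' u = σ}

theorem sig_eq (μ' : ModuleOrder n m) (F : Fin m → MvPolynomial (Fin n) k)
    (f : MvPolynomial (Fin n) k) :
    sig μ' F f = if hne : (sigSet μ' F f).Nonempty then μ'.wf.min _ hne else mdefault := rfl

theorem sigSet_nonempty (μ' : ModuleOrder n m) {F : Fin m → MvPolynomial (Fin n) k}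
    {f : MvPolynomial (Fin n) k} (hfI : f ∈ idealI F) (hf : f ≠ 0) :
    (sigSet μ' F f).Nonempty := by
  obtain ⟨u, hu⟩ := (Ideal.mem_span_range_iff_exists_fun ).mp hfI
  have hu0 : u ≠ 0 := by
    intro h
    apply hf
    rw [h] at hu
    simpa using hu.symm
  exact ⟨mLT μ' u, u, hu0, hu, rfl⟩

theorem sig_mem (μ' : ModuleOrder n m) {F : Fin m → MvPolynomial (Fin n) k}
    {f : MvPolynomial (Fin n) k} (hfI : f ∈ idealI F) (hf : f ≠ 0) :
    sig μ' F f ∈ sigSet μ' F f := by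
  rw [sig_eq, dif_pos (sigSet_nonempty μ' hfI hf)]
  exact μ'.wf.min_mem _ _

theorem sig_le (μ' : ModuleOrder n m) {F : Fin m → MvPolynomial (Fin n) k}
    {f : MvPolynomial (Fin n) k} (hfI : f ∈ idealI F) (hf : f ≠ 0)
    {σ : MTerm n m} (hσ : σ ∈ sigSet μ' F f) :
    μ'.ord.le (sig μ' F f) σ := by
  rw [sig_eq, dif_pos (sigSet_nonempty μ' hfI hf)]
  exact @le_of_not_gt _ μ'.ord _ _ (μ'.wf.not_lt_min _ hσ)

theorem msupport_C_mul {α : k} (hα : α ≠ 0) (u : Fin m → MvPolynomial (Fin n) k) :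
    msupport (fun i => C α * u i) = msupport u := by
  simp only [msupport, support_C_mul hα]

theorem mLT_C_mul (μ' : ModuleOrder n m) {α : k} (hα : α ≠ 0)
    (u : Fin m → MvPolynomial (Fin n) k) :
    mLT μ' (fun i => C α * u i) = mLT μ' u := by
  rw [mLT, mLT, msupport_C_mul hα]

theorem sigSet_C_mul (μ' : ModuleOrder n m) (F : Fin m → MvPolynomial (Fin n) k)
    {α : k} (hα : α ≠ 0) (f : MvPolynomial (Fin n) k) :
    sigSet μ' F (C α * f) = sigSet μ' F f := by
  have key : ∀ (β : k), β ≠ 0 → ∀ g : MvPolynomial (Fin n) k,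
      sigSet μ' F g ⊆ sigSet μ' F (C β * g) := by
    rintro β hβ g σ ⟨u, hu0, huv, huLT⟩
    refine ⟨fun i => C β * u i, ?_, ?_, ?_⟩
    · intro h
      apply hu0
      funext i
      have := congrFun h i
      simp only [Pi.zero_apply] at this ⊢
      rcases mul_eq_zero.mp this with h' | h'
      · exact absurd (by simpa using h') hβ
      · exact h'
    · rw [vmap] at huv ⊢
      rw [← huv, Finset.mul_sum]
      exact Finset.sum_congr rfl fun i _ => by ring
    · rw [mLT_C_mul μ' hβ, huLT]
  apply Set.Subset.antisymm
  · intro σ hσ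
    have := key α⁻¹ (inv_ne_zero hα) (C α * f) hσ
    rwa [← mul_assoc, ← C_mul, inv_mul_cancel₀ hα, C_1, one_mul] at this
  · exact key α hα f

theorem sig_C_mul (μ' : ModuleOrder n m) (F : Fin m → MvPolynomial (Fin n) k)
    {α : k} (hα : α ≠ 0) (f : MvPolynomial (Fin n) k) :
    sig μ' F (C α * f) = sig μ' F f := by
  rw [sig_eq, sig_eq, sigSet_C_mul μ' F hα]

/-- The set whose min is `phi`. -/
def phiSet (μ : AdmissibleOrder n) (μ' : ModuleOrder n m)
    (F : Fin m → MvPolynomial (Fin n) k) (t : Mon n) : Set (MTerm n m) :=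
  {σ : MTerm n m | ∃ f : MvPolynomial (Fin n) k,
      f ∈ idealI F ∧ f ≠ 0 ∧ pLT μ f = t ∧ sig μ' F f = σ}

theorem phi_eq (μ : AdmissibleOrder n) (μ' : ModuleOrder n m)
    (F : Fin m → MvPolynomial (Fin n) k) (t : Mon n) :
    phi μ μ' F t =
      if hne : (phiSet μ μ' F t).Nonempty then μ'.wf.min _ hne else mdefault := rfl

end F5Aux

/-- a nonzero `f ∈ I` is S-irreducible iff `S(f) = φ(LT(f))`. -/
theorem stmt_8 {k : Type*} [Field k] {n m : ℕ} [NeZero m]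
    (μ : AdmissibleOrder n) (μ' : ModuleOrder n m)
    (F : Fin m → MvPolynomial (Fin n) k)
    (f : MvPolynomial (Fin n) k) (hfI : f ∈ idealI F) (hf : f ≠ 0) :
    SIrr μ μ' F f (sig μ' F f) ↔ sig μ' F f = phi μ μ' F (pLT μ f) := by
  have hfset : sig μ' F f ∈ F5Aux.phiSet μ μ' F (pLT μ f) := ⟨f, hfI, hf, rfl, rfl⟩
  have hnon : (F5Aux.phiSet μ μ' F (pLT μ f)).Nonempty := ⟨_, hfset⟩
  have hphile : μ'.ord.le (phi μ μ' F (pLT μ f)) (sig μ' F f) := by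
    rw [F5Aux.phi_eq, dif_pos hnon]
    exact @le_of_not_gt _ μ'.ord _ _ (μ'.wf.not_lt_min _ hfset)
  constructor
  · intro hirr
    by_contra hne
    have hlt : μ'.ord.lt (phi μ μ' F (pLT μ f)) (sig μ' F f) :=
      @lt_of_le_of_ne _ μ'.ord.toPartialOrder _ _ hphile (fun h => hne h.symm)
    obtain ⟨f', hf'I, hf'0, hf'LT, hf'sig⟩ :
        phi μ μ' F (pLT μ f) ∈ F5Aux.phiSet μ μ' F (pLT μ f) := by
      rw [F5Aux.phi_eq, dif_pos hnon]; exact μ'.wf.min_mem _ _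
    rcases hirr with h0 | hno
    · exact hf h0
    apply hno
    have hLCf' := F5Aux.pLC_ne_zero μ hf'0
    set α := pLC μ f * (pLC μ f')⁻¹ with hαdef
    have hα : α ≠ 0 := mul_ne_zero (F5Aux.pLC_ne_zero μ hf) (inv_ne_zero hLCf')
    have hmono : (monomial (0 : Mon n) α : MvPolynomial (Fin n) k) = C α :=
      (MvPolynomial.C_apply).symm
    refine ⟨f', hf'I, hf'0, f - monomial 0 α * f', 0, α, hα, rfl, ?_, ?_⟩
    · apply F5Aux.pLT_lt_of μ
      · intro s hs
        rcases Finset.mem_union.mp (MvPolynomial.support_sub _ _ _ hs) with h | h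
        · exact F5Aux.le_pLT μ h
        · rw [hmono, F5Aux.support_C_mul hα] at h
          rw [← hf'LT]
          exact F5Aux.le_pLT μ h
      · have hc : f'.coeff (pLT μ f) = pLC μ f' := by rw [← hf'LT]; rfl
        rw [hmono, MvPolynomial.coeff_sub, coeff_C_mul, hc, hαdef]
        have hcf : f.coeff (pLT μ f) = pLC μ f := rfl
        rw [hcf]
        field_simp
        ring
    · have h1 : (monomial (0 : Mon n) (1 : k)) * f' = f' := by
        have : (monomial (0 : Mon n) (1 : k)) = 1 := by simp
        rw [this, one_mul]
      rw [h1, hf'sig]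
      exact hlt
  · intro hsig
    refine Or.inr ?_
    rintro ⟨h, hhI, hh0, g, t, α, hα, hgdef, hglt, hslt⟩
    set p := monomial t (1 : k) * h with hp
    have hCp : (monomial t α : MvPolynomial (Fin n) k) * h = C α * p := by
      rw [hp, ← mul_assoc, C_mul_monomial, mul_one]
    have hpI : p ∈ idealI F := Ideal.mul_mem_left _ _ hhI
    rcases hglt with hg0 | hglt
    · have hf' : f = C α * p := by
        have := hgdef.symm.trans hg0
        rw [hCp] at this
        linear_combination this
      have hsigp : sig μ' F f = sig μ' F p := by
        rw [hf', F5Aux.sig_C_mul μ' F hα]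
      rw [hsigp] at hslt
      exact absurd hslt (@lt_irrefl _ μ'.ord.toPartialOrder.toPreorder _)
    · have hsub := F5Aux.pLT_sub_eq μ hf (g := g) (fun s hs =>
        @lt_of_le_of_lt _ μ.ord.toPartialOrder.toPreorder _ _ _ (F5Aux.le_pLT μ hs) hglt)
      have hfg : f - g = C α * p := by
        rw [hgdef, hCp]
        ring
      have hCp0 : C α * p ≠ 0 := hfg ▸ hsub.1
      have hp0 : p ≠ 0 := fun h0 => hCp0 (by rw [h0, mul_zero])
      have hpLT : pLT μ p = pLT μ f := by
        rw [← F5Aux.pLT_C_mul μ hα p, ← hfg, hsub.2]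
      have hmem : sig μ' F p ∈ F5Aux.phiSet μ μ' F (pLT μ f) := ⟨p, hpI, hp0, hpLT, rfl⟩
      have hle : μ'.ord.le (phi μ μ' F (pLT μ f)) (sig μ' F p) := by
        rw [F5Aux.phi_eq, dif_pos hnon]
        exact @le_of_not_gt _ μ'.ord _ _ (μ'.wf.not_lt_min _ hmem)
      rw [← hsig] at hle
      exact absurd hslt ((@not_lt _ μ'.ord _ _).mpr hle)
end

section
/- If G is an S-Gröbner basis, then G is a Gröbner basis of I with respect to μ; that is, G ⊆ I, G generates I, and for every nonzero f ∈ I there exists g ∈ G such that LT(g) divides LT(f). -/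
open MvPolynomial

open F5 MvPolynomial

namespace StmtAux

variable {k : Type*} [Field k] {n m : ℕ} [NeZero m]

theorem ord_lt_of_le_ne (μ : AdmissibleOrder n) {s t : Mon n}
    (h : μ.ord.le s t) (hne : s ≠ t) : μ.ord.lt s t :=
  (μ.ord.lt_iff_le_not_ge s t).mpr ⟨h, fun h' => hne (μ.ord.le_antisymm _ _ h h')⟩

theorem ord_le_of_lt (μ : AdmissibleOrder n) {s t : Mon n}
    (h : μ.ord.lt s t) : μ.ord.le s t :=
  ((μ.ord.lt_iff_le_not_ge s t).mp h).1

theorem ord_add_le_add (μ : AdmissibleOrder n) {s t : Mon n} (u : Mon n)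
    (h : μ.ord.le s t) : μ.ord.le (u + s) (u + t) := by
  by_cases he : s = t
  · subst he; exact μ.ord.le_refl _
  · exact ord_le_of_lt μ (μ.mul_lt_mul s t u (ord_lt_of_le_ne μ h he))

theorem ord_le_of_le (μ : AdmissibleOrder n) {s t : Mon n} (h : s ≤ t) :
    μ.ord.le s t := by
  by_cases he : s = t
  · subst he; exact μ.ord.le_refl _
  · have h0 : t - s ≠ 0 := fun h0 => he (le_antisymm h (tsub_eq_zero_iff_le.mp h0))
    have h1 : μ.ord.lt 0 (t - s) := ord_lt_of_le_ne μ (μ.one_le _) (Ne.symm h0)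
    have h2 := μ.mul_lt_mul 0 (t - s) s h1
    rw [add_zero, add_tsub_cancel_of_le h] at h2
    exact ord_le_of_lt μ h2

theorem wf_mu (μ : AdmissibleOrder n) : WellFounded μ.ord.lt := by
  have hpwo : (Set.univ : Set (Mon n)).PartiallyWellOrderedOn μ.ord.le := by
    intro f
    obtain ⟨i, j, hij, hle⟩ := (wellQuasiOrdered_le (α := Mon n)) (fun i => (f i).1)
    exact ⟨i, j, hij, ord_le_of_le μ hle⟩
  haveI : IsPreorder (Mon n) μ.ord.le :=
    { refl := μ.ord.le_refl
      trans := fun a b c => μ.ord.le_trans a b c }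
  have hwf := Set.wellFoundedOn_univ.mp hpwo.wellFoundedOn
  exact Subrelation.wf (fun {a b} h => (μ.ord.lt_iff_le_not_ge a b).mp h) hwf

theorem le_pLT (μ : AdmissibleOrder n) {f : MvPolynomial (Fin n) k} {s : Mon n}
    (hs : s ∈ f.support) : μ.ord.le s (pLT μ f) := by
  have hne : f.support.Nonempty := ⟨s, hs⟩
  rw [pLT, dif_pos hne]
  exact @Finset.le_max' _ μ.ord _ s hs

theorem pLT_mem (μ : AdmissibleOrder n) {f : MvPolynomial (Fin n) k} (hf : f ≠ 0) :
    pLT μ f ∈ f.support := by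
  have hne : f.support.Nonempty := support_nonempty.mpr hf
  rw [pLT, dif_pos hne]
  exact @Finset.max'_mem _ μ.ord _ hne

theorem pLC_ne_zero (μ : AdmissibleOrder n) {f : MvPolynomial (Fin n) k} (hf : f ≠ 0) :
    pLC μ f ≠ 0 :=
  mem_support_iff.mp (pLT_mem μ hf)

theorem pLT_eq (μ : AdmissibleOrder n) {f : MvPolynomial (Fin n) k} {t : Mon n}
    (ht : t ∈ f.support) (hmax : ∀ s ∈ f.support, μ.ord.le s t) : pLT μ f = t := by
  have hne : f.support.Nonempty := ⟨t, ht⟩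
  rw [pLT, dif_pos hne]
  exact μ.ord.le_antisymm _ _ (@Finset.max'_le _ μ.ord _ hne t hmax)
    (@Finset.le_max' _ μ.ord _ t ht)

theorem pLT_monomial_mul (μ : AdmissibleOrder n) (t : Mon n) {c : k}
    {g : MvPolynomial (Fin n) k} (hc : c ≠ 0) (hg : g ≠ 0) :
    pLT μ (monomial t c * g) = t + pLT μ g := by
  apply pLT_eq μ
  · rw [mem_support_iff, coeff_monomial_mul]
    exact mul_ne_zero hc (pLC_ne_zero μ hg)
  · intro s hs
    rw [mem_support_iff, coeff_monomial_mul'] at hs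
    by_cases hts : t ≤ s
    · rw [if_pos hts] at hs
      have hmem : s - t ∈ g.support := mem_support_iff.mpr (mul_ne_zero_iff.mp hs).2
      have h2 := ord_add_le_add μ t (le_pLT μ hmem)
      rwa [add_tsub_cancel_of_le hts] at h2
    · rw [if_neg hts] at hs; exact absurd rfl hs

theorem pLC_monomial_mul (μ : AdmissibleOrder n) (t : Mon n) {c : k}
    {g : MvPolynomial (Fin n) k} (hc : c ≠ 0) (hg : g ≠ 0) :
    pLC μ (monomial t c * g) = c * pLC μ g := by
  rw [pLC, pLT_monomial_mul μ t hc hg, coeff_monomial_mul, pLC]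

theorem pLT_sub_lt (μ : AdmissibleOrder n) {f h : MvPolynomial (Fin n) k} (hf : f ≠ 0)
    (hLT : pLT μ h = pLT μ f) (hLC : pLC μ h = pLC μ f) (hne : f - h ≠ 0) :
    μ.ord.lt (pLT μ (f - h)) (pLT μ f) := by
  classical
  have hsupp : ∀ s ∈ (f - h).support, μ.ord.le s (pLT μ f) := by
    intro s hs
    rcases Finset.mem_union.mp (support_sub _ f h hs) with h1 | h1
    · exact le_pLT μ h1
    · exact hLT ▸ le_pLT μ h1
  have hc : coeff (pLT μ f) (f - h) = 0 := by
    rw [coeff_sub]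
    have h2 : coeff (pLT μ f) h = pLC μ h := by rw [pLC, hLT]
    have h3 : coeff (pLT μ f) f = pLC μ f := rfl
    rw [h2, h3, hLC, sub_self]
  have hmem := pLT_mem μ hne
  refine ord_lt_of_le_ne μ (hsupp _ hmem) fun heq => ?_
  rw [mem_support_iff, heq, hc] at hmem
  exact hmem rfl

theorem pLT_sub_eq (μ : AdmissibleOrder n) {f g : MvPolynomial (Fin n) k} (hf : f ≠ 0)
    (hg : g = 0 ∨ μ.ord.lt (pLT μ g) (pLT μ f)) : pLT μ (f - g) = pLT μ f := by
  classical
  rcases hg with rfl | hlt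
  · rw [sub_zero]
  · have hgnot : pLT μ f ∉ g.support := fun hmem =>
      ((μ.ord.lt_iff_le_not_ge _ _).mp hlt).2 (le_pLT μ hmem)
    apply pLT_eq μ
    · rw [mem_support_iff, coeff_sub, notMem_support_iff.mp hgnot, sub_zero]
      exact pLC_ne_zero μ hf
    · intro s hs
      rcases Finset.mem_union.mp (support_sub _ f g hs) with h1 | h1
      · exact le_pLT μ h1
      · exact μ.ord.le_trans _ _ _ (le_pLT μ h1) (ord_le_of_lt μ hlt)

theorem vmap_C_mul (F : Fin m → MvPolynomial (Fin n) k) (β : k)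
    (u : Fin m → MvPolynomial (Fin n) k) :
    vmap F (fun l => C β * u l) = C β * vmap F u := by
  rw [vmap, vmap, Finset.mul_sum]
  exact Finset.sum_congr rfl fun i _ => by ring

theorem support_C_mul {β : k} (hβ : β ≠ 0) (q : MvPolynomial (Fin n) k) :
    (C β * q).support = q.support := by
  ext s
  simp [mem_support_iff, coeff_C_mul, hβ]

theorem msupport_C_mul {β : k} (hβ : β ≠ 0) (u : Fin m → MvPolynomial (Fin n) k) :
    msupport (fun l => C β * u l) = msupport u := by
  ext τ
  simp only [msupport, Finset.mem_biUnion, Finset.mem_univ, true_and, Finset.mem_image,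
    support_C_mul hβ]

theorem mLT_C_mul (μ' : ModuleOrder n m) {β : k} (hβ : β ≠ 0)
    (u : Fin m → MvPolynomial (Fin n) k) :
    mLT μ' (fun l => C β * u l) = mLT μ' u := by
  unfold mLT
  rw [msupport_C_mul hβ]

theorem sig_set_mem (μ' : ModuleOrder n m) (F : Fin m → MvPolynomial (Fin n) k)
    {β : k} (hβ : β ≠ 0) (p : MvPolynomial (Fin n) k) {σ : MTerm n m}
    (h : σ ∈ {σ : MTerm n m | ∃ u, u ≠ 0 ∧ vmap F u = p ∧ mLT μ' u = σ}) :
    σ ∈ {σ : MTerm n m | ∃ u, u ≠ 0 ∧ vmap F u = C β * p ∧ mLT μ' u = σ} := by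
  obtain ⟨u, hu, hv, hmm⟩ := h
  refine ⟨fun l => C β * u l, ?_, by rw [vmap_C_mul, hv], by rw [mLT_C_mul μ' hβ]; exact hmm⟩
  intro h0
  apply hu; funext l
  have h1 := congrFun h0 l
  simp only [Pi.zero_apply] at h1 ⊢
  rcases mul_eq_zero.mp h1 with h2 | h2
  · exact absurd (C_eq_zero.mp h2) hβ
  · exact h2

theorem sig_C_mul (μ' : ModuleOrder n m) (F : Fin m → MvPolynomial (Fin n) k)
    {α : k} (hα : α ≠ 0) (p : MvPolynomial (Fin n) k) :
    sig μ' F (C α * p) = sig μ' F p := by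
  have hset : {σ : MTerm n m | ∃ u, u ≠ 0 ∧ vmap F u = C α * p ∧ mLT μ' u = σ}
      = {σ : MTerm n m | ∃ u, u ≠ 0 ∧ vmap F u = p ∧ mLT μ' u = σ} := by
    ext σ
    constructor
    · intro h
      have h2 := sig_set_mem μ' F (inv_ne_zero hα) (C α * p) h
      simp only [← mul_assoc, ← C_mul, inv_mul_cancel₀ hα, C_1, one_mul] at h2
      exact h2
    · exact sig_set_mem μ' F hα p
  unfold sig
  rw [hset]

theorem key (μ : AdmissibleOrder n) (μ' : ModuleOrder n m)
    (F : Fin m → MvPolynomial (Fin n) k) (G : Set (MvPolynomial (Fin n) k))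
    (hG : IsSGB μ μ' F G) :
    ∀ f : MvPolynomial (Fin n) k, f ∈ idealI F → f ≠ 0 →
      ∃ g ∈ G, ∃ u : Mon n, pLT μ f = u + pLT μ g := by
  intro f hf hf0
  set S : Set (MTerm n m) :=
    {σ | ∃ f', f' ∈ idealI F ∧ f' ≠ 0 ∧ pLT μ f' = pLT μ f ∧ sig μ' F f' = σ} with hS
  have hSne : S.Nonempty := ⟨sig μ' F f, f, hf, hf0, rfl, rfl⟩
  obtain ⟨f', hf'I, hf'0, hf'LT, hf'sig⟩ := μ'.wf.min_mem S hSne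
  have hirr : SIrr μ μ' F f' (sig μ' F f') := by
    refine Or.inr ?_
    rintro ⟨h, hhI, hh0, g, t, α, hα, hgeq, hgor, hσ⟩
    set h' := monomial t α * h with hh'
    have hh'0 : h' ≠ 0 := mul_ne_zero (fun h1 => hα (monomial_eq_zero.mp h1)) hh0
    have hh'I : h' ∈ idealI F := Ideal.mul_mem_left _ _ hhI
    have hsub : f' - g = h' := by rw [hgeq]; exact sub_sub_cancel f' h'
    have hLth' : pLT μ h' = pLT μ f' := by
      rw [← hsub]; exact pLT_sub_eq μ hf'0 hgor
    have hsig' : sig μ' F h' = sig μ' F ((monomial t (1 : k)) * h) := by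
      have heq : h' = C α * ((monomial t (1 : k)) * h) := by
        rw [← mul_assoc, C_mul_monomial, mul_one]
      rw [heq, sig_C_mul μ' F hα]
    have hmem : sig μ' F h' ∈ S := ⟨h', hh'I, hh'0, hLth'.trans hf'LT, rfl⟩
    have hnl : ¬ μ'.ord.lt (sig μ' F h') (μ'.wf.min S hSne) := μ'.wf.not_lt_min S hmem
    refine hnl ?_
    rw [hsig']
    rw [hf'sig] at hσ
    exact hσ
  obtain ⟨g, hgG, t, hLT, _⟩ := hG.2 f' hf'I hf'0 hirr
  have hg0 : g ≠ 0 := (hG.1 g hgG).2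
  refine ⟨g, hgG, t, ?_⟩
  rw [← hf'LT, ← hLT, pLT_monomial_mul μ t one_ne_zero hg0]

end StmtAux

open StmtAux in
/-- an S-Gröbner basis is a Gröbner basis of `I` w.r.t. `μ`. -/
theorem stmt_10 {k : Type*} [Field k] {n m : ℕ} [NeZero m]
    (μ : AdmissibleOrder n) (μ' : ModuleOrder n m)
    (F : Fin m → MvPolynomial (Fin n) k)
    (G : Set (MvPolynomial (Fin n) k)) (hG : IsSGB μ μ' F G) :
    (∀ g ∈ G, g ∈ idealI F) ∧
    Ideal.span G = idealI F ∧
    ∀ f : MvPolynomial (Fin n) k, f ∈ idealI F → f ≠ 0 →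
      ∃ g ∈ G, ∃ u : Mon n, pLT μ f = u + pLT μ g := by
  have hkey := key μ μ' F G hG
  have hsub : Ideal.span G ≤ idealI F := Ideal.span_le.mpr fun g hg => (hG.1 g hg).1
  refine ⟨fun g hg => (hG.1 g hg).1, ?_, hkey⟩
  refine le_antisymm hsub ?_
  intro f hf
  have hrev : ∀ t : Mon n, ∀ f : MvPolynomial (Fin n) k,
      f ∈ idealI F → pLT μ f = t → f ∈ Ideal.span G := by
    intro t
    induction t using (wf_mu μ).induction with
    | _ t IH =>
      intro f hfI hft
      by_cases hf0 : f = 0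
      · subst hf0; exact (Ideal.span G).zero_mem
      obtain ⟨g, hgG, u, hu⟩ := hkey f hfI hf0
      have hg0 : g ≠ 0 := (hG.1 g hgG).2
      set c : k := pLC μ f * (pLC μ g)⁻¹ with hc
      have hc0 : c ≠ 0 := mul_ne_zero (pLC_ne_zero μ hf0) (inv_ne_zero (pLC_ne_zero μ hg0))
      set h : MvPolynomial (Fin n) k := monomial u c * g with hh
      have hhspan : h ∈ Ideal.span G :=
        Ideal.mul_mem_left _ _ (Ideal.subset_span hgG)
      have hhI : h ∈ idealI F := Ideal.mul_mem_left _ _ (hG.1 g hgG).1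
      have hLTh : pLT μ h = pLT μ f := by
        rw [hh, pLT_monomial_mul μ u hc0 hg0, hu]
      have hLCh : pLC μ h = pLC μ f := by
        rw [hh, pLC_monomial_mul μ u hc0 hg0, hc,
          mul_assoc, inv_mul_cancel₀ (pLC_ne_zero μ hg0), mul_one]
      by_cases hfh : f - h = 0
      · have : f = h := sub_eq_zero.mp hfh
        rw [this]; exact hhspan
      · have hlt : μ.ord.lt (pLT μ (f - h)) t := by
          rw [← hft]; exact pLT_sub_lt μ hf0 hLTh hLCh hfh
        have hmem : f - h ∈ Ideal.span G :=
          IH (pLT μ (f - h)) hlt (f - h) (Ideal.sub_mem _ hfI hhI) rfl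
        have : f = (f - h) + h := by ring
        rw [this]
        exact Ideal.add_mem _ hmem hhspan
  exact hrev (pLT μ f) f hf rfl
end
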